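/- arXiv:2006.15722 — 2 statements merged into one kernel-verified Lean document; each statement's English description precedes it below -/
import Mathlib

section
/- With the setting of the previous statement: for $0 < k < 3$, the ratio $E[Z^2]/E[Z]^2$ grows exponentially in $\gamma$ as $\gamma \to \infty$; specifically there exist constants $c, \gamma_0 > 0$ such that $E[Z^2]/E[Z]^2 \geq e^{c\gamma^2}$ for all $\gamma \geq \gamma_0$. -/
open MeasureTheory ProbabilityTheory

/-- Standard Gaussian tail probability `Φ̄(t) = P(N(0,1) ≥ t)`. -/
noncomputable def gaussTail (t : ℝ) : ℝ :=
  ((gaussianReal 0 1) (Set.Ici t)).toReal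

/-- The IS output `Z(x) = I(x ≥ γ or x ≤ -kγ) · exp(γ²/2 - γx)`. -/
noncomputable def Zfun (γ k x : ℝ) : ℝ :=
  (if γ ≤ x ∨ x ≤ -(k * γ) then 1 else 0) * Real.exp (γ ^ 2 / 2 - γ * x)

section Aux
open Real Set NNReal ENNReal

lemma integral_gaussianReal_eq (γ : ℝ) (f : ℝ → ℝ) :
    ∫ x, f x ∂(gaussianReal γ 1) = ∫ x, gaussianPDFReal γ 1 x * f x := by
  rw [gaussianReal_of_var_ne_zero γ one_ne_zero]
  have h : (gaussianPDF γ 1) = fun x => ((Real.toNNReal (gaussianPDFReal γ 1 x) : ℝ≥0) : ℝ≥0∞) :=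
    rfl
  rw [h, integral_withDensity_eq_integral_smul
    ((measurable_gaussianPDFReal γ 1).real_toNNReal) f]
  refine integral_congr_ae (Filter.Eventually.of_forall fun x => ?_)
  simp only [NNReal.smul_def, smul_eq_mul]
  rw [Real.coe_toNNReal _ (gaussianPDFReal_nonneg _ _ _)]

lemma pdf_one (μ x : ℝ) :
    gaussianPDFReal μ 1 x = (Real.sqrt (2*π))⁻¹ * Real.exp (-(x-μ)^2/2) := by
  simp [gaussianPDFReal]

lemma tail_Ici (t : ℝ) (ht : 1 ≤ t) :
    ∫ x in Ici t, gaussianPDFReal 0 1 x ≤ Real.exp (-t^2/2) := by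
  have h2π : (1:ℝ) ≤ Real.sqrt (2*π) := by
    rw [show (1:ℝ) = Real.sqrt 1 by simp]
    exact Real.sqrt_le_sqrt (by nlinarith [pi_gt_three])
  have hmaj : ∀ x ∈ Ici t, gaussianPDFReal 0 1 x
      ≤ (Real.sqrt (2*π))⁻¹ * (Real.exp (-t^2/2) * Real.exp (t - x)) := by
    intro x hx
    simp only [mem_Ici] at hx
    rw [pdf_one, ← Real.exp_add]
    refine mul_le_mul_of_nonneg_left (Real.exp_le_exp.mpr ?_) (by positivity)
    nlinarith [mul_nonneg (by linarith : (0:ℝ) ≤ x - t) (by linarith : (0:ℝ) ≤ x + t - 2)]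
  have hfeq : (fun x : ℝ => (Real.sqrt (2*π))⁻¹ * (Real.exp (-t^2/2) * Real.exp (t - x)))
      = fun x : ℝ => ((Real.sqrt (2*π))⁻¹ * (Real.exp (-t^2/2) * Real.exp t)) * Real.exp (-1 * x) := by
    funext x
    rw [show Real.exp (t - x) = Real.exp t * Real.exp (-1*x) by
      rw [← Real.exp_add]; congr 1; ring]
    ring
  have hint : IntegrableOn
      (fun x : ℝ => (Real.sqrt (2*π))⁻¹ * (Real.exp (-t^2/2) * Real.exp (t - x))) (Ici t) := by
    rw [hfeq, integrableOn_Ici_iff_integrableOn_Ioi]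
    exact (exp_neg_integrableOn_Ioi t one_pos).const_mul _
  calc ∫ x in Ici t, gaussianPDFReal 0 1 x
      ≤ ∫ x in Ici t, (Real.sqrt (2*π))⁻¹ * (Real.exp (-t^2/2) * Real.exp (t - x)) :=
        setIntegral_mono_on (integrable_gaussianPDFReal 0 1).integrableOn hint
          measurableSet_Ici hmaj
    _ = ((Real.sqrt (2*π))⁻¹ * (Real.exp (-t^2/2) * Real.exp t)) * ∫ x in Ici t, Real.exp (-1*x) := by
        rw [hfeq, integral_const_mul]
    _ ≤ Real.exp (-t^2/2) := by
        rw [integral_Ici_eq_integral_Ioi]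
        have : ∫ x in Ioi t, Real.exp (-1*x) = Real.exp (-t) := by
          simp_rw [neg_one_mul]
          exact integral_exp_neg_Ioi t
        rw [this]
        have h1 : Real.exp t * Real.exp (-t) = 1 := by rw [← Real.exp_add]; simp
        have h0 : (Real.sqrt (2*π))⁻¹ ≤ 1 := by
          rw [inv_le_one_iff₀]; right; exact h2π
        calc (Real.sqrt (2*π))⁻¹ * (Real.exp (-t^2/2) * Real.exp t) * Real.exp (-t)
            = (Real.sqrt (2*π))⁻¹ * Real.exp (-t^2/2) := by
              rw [mul_assoc, mul_assoc (Real.exp (-t^2/2)) (Real.exp t) (Real.exp (-t)), h1,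
                mul_one]
          _ ≤ Real.exp (-t^2/2) := by
              nlinarith [Real.exp_pos (-t^2/2), h0]

lemma tail_Iic (t : ℝ) (ht : 1 ≤ t) :
    ∫ x in Iic (-t), gaussianPDFReal 0 1 x ≤ Real.exp (-t^2/2) := by
  have h2π : (1:ℝ) ≤ Real.sqrt (2*π) := by
    rw [show (1:ℝ) = Real.sqrt 1 by simp]
    exact Real.sqrt_le_sqrt (by nlinarith [pi_gt_three])
  have hmaj : ∀ x ∈ Iic (-t), gaussianPDFReal 0 1 x
      ≤ (Real.sqrt (2*π))⁻¹ * (Real.exp (-t^2/2) * Real.exp (x + t)) := by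
    intro x hx
    simp only [mem_Iic] at hx
    rw [pdf_one, ← Real.exp_add]
    refine mul_le_mul_of_nonneg_left (Real.exp_le_exp.mpr ?_) (by positivity)
    nlinarith [mul_nonneg (by linarith : (0:ℝ) ≤ -(x + t)) (by linarith : (0:ℝ) ≤ -(x - t + 2))]
  have hfeq : (fun x : ℝ => (Real.sqrt (2*π))⁻¹ * (Real.exp (-t^2/2) * Real.exp (x + t)))
      = fun x : ℝ => ((Real.sqrt (2*π))⁻¹ * (Real.exp (-t^2/2) * Real.exp t)) * Real.exp x := by
    funext x
    rw [show Real.exp (x + t) = Real.exp t * Real.exp x by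
      rw [← Real.exp_add]; congr 1; ring]
    ring
  have hint : IntegrableOn
      (fun x : ℝ => (Real.sqrt (2*π))⁻¹ * (Real.exp (-t^2/2) * Real.exp (x + t))) (Iic (-t)) := by
    rw [hfeq]
    exact (integrableOn_exp_Iic (-t)).const_mul _
  calc ∫ x in Iic (-t), gaussianPDFReal 0 1 x
      ≤ ∫ x in Iic (-t), (Real.sqrt (2*π))⁻¹ * (Real.exp (-t^2/2) * Real.exp (x + t)) :=
        setIntegral_mono_on (integrable_gaussianPDFReal 0 1).integrableOn hint
          measurableSet_Iic hmaj
    _ = ((Real.sqrt (2*π))⁻¹ * (Real.exp (-t^2/2) * Real.exp t)) * ∫ x in Iic (-t), Real.exp x := by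
        rw [hfeq, integral_const_mul]
    _ ≤ Real.exp (-t^2/2) := by
        rw [integral_exp_Iic]
        have h1 : Real.exp t * Real.exp (-t) = 1 := by rw [← Real.exp_add]; simp
        have h0 : (Real.sqrt (2*π))⁻¹ ≤ 1 := by
          rw [inv_le_one_iff₀]; right; exact h2π
        calc (Real.sqrt (2*π))⁻¹ * (Real.exp (-t^2/2) * Real.exp t) * Real.exp (-t)
            = (Real.sqrt (2*π))⁻¹ * Real.exp (-t^2/2) := by
              rw [mul_assoc, mul_assoc (Real.exp (-t^2/2)) (Real.exp t) (Real.exp (-t)), h1,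
                mul_one]
          _ ≤ Real.exp (-t^2/2) := by
              nlinarith [Real.exp_pos (-t^2/2), h0]

noncomputable def indS (γ k x : ℝ) : ℝ := if γ ≤ x ∨ x ≤ -(k * γ) then 1 else 0

lemma indS_nonneg (γ k x : ℝ) : 0 ≤ indS γ k x := by unfold indS; split <;> norm_num

lemma indS_le_one (γ k x : ℝ) : indS γ k x ≤ 1 := by unfold indS; split <;> norm_num

lemma indS_sq (γ k x : ℝ) : (indS γ k x)^2 = indS γ k x := by unfold indS; split <;> norm_num

lemma indS_measurable (γ k : ℝ) : Measurable (indS γ k) := by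
  have hset : MeasurableSet {x : ℝ | γ ≤ x ∨ x ≤ -(k * γ)} := by
    have : {x : ℝ | γ ≤ x ∨ x ≤ -(k * γ)} = Ici γ ∪ Iic (-(k * γ)) := by
      ext x; simp [Set.mem_union]
    rw [this]
    exact measurableSet_Ici.union measurableSet_Iic
  exact Measurable.ite hset measurable_const measurable_const

lemma indS_mul_pdf_integrable (γ k μ : ℝ) :
    Integrable (fun x => indS γ k x * gaussianPDFReal μ 1 x) := by
  refine (integrable_gaussianPDFReal μ 1).mono
    (((indS_measurable γ k).mul (measurable_gaussianPDFReal μ 1)).aestronglyMeasurable)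
    (Filter.Eventually.of_forall fun x => ?_)
  simp only [Real.norm_eq_abs, abs_mul]
  rw [abs_of_nonneg (indS_nonneg γ k x), abs_of_nonneg (gaussianPDFReal_nonneg μ 1 x)]
  nlinarith [indS_le_one γ k x, indS_nonneg γ k x, gaussianPDFReal_nonneg μ 1 x]

lemma hZ1 (γ k x : ℝ) :
    gaussianPDFReal γ 1 x * Zfun γ k x = indS γ k x * gaussianPDFReal 0 1 x := by
  unfold Zfun indS
  rw [pdf_one, pdf_one]
  have he : Real.exp (-(x-γ)^2/2) * Real.exp (γ^2/2 - γ*x) = Real.exp (-(x-0)^2/2) := by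
    rw [← Real.exp_add]; congr 1; ring
  linear_combination ((Real.sqrt (2*π))⁻¹ * (if γ ≤ x ∨ x ≤ -(k * γ) then (1:ℝ) else 0)) * he

lemma hZ2 (γ k x : ℝ) :
    gaussianPDFReal γ 1 x * (Zfun γ k x)^2
      = Real.exp (γ^2) * (indS γ k x * gaussianPDFReal (-γ) 1 x) := by
  unfold Zfun
  rw [pdf_one, pdf_one, mul_pow, show ((if γ ≤ x ∨ x ≤ -(k * γ) then (1:ℝ) else 0))^2
      = indS γ k x from indS_sq γ k x]
  have he : Real.exp (-(x-γ)^2/2) * (Real.exp (γ^2/2 - γ*x))^2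
      = Real.exp (γ^2) * Real.exp (-(x-(-γ))^2/2) := by
    rw [show (Real.exp (γ^2/2 - γ*x))^2 = Real.exp (γ^2 - 2*(γ*x)) by
        rw [sq, ← Real.exp_add]; congr 1; ring,
      ← Real.exp_add, ← Real.exp_add]
    congr 1; ring
  linear_combination ((Real.sqrt (2*π))⁻¹ * indS γ k x) * he

lemma I_le (γ k : ℝ) (hγ : 1 ≤ γ) (hkγ : 1 ≤ k*γ) :
    ∫ x, indS γ k x * gaussianPDFReal 0 1 x
      ≤ Real.exp (-γ^2/2) + Real.exp (-(k*γ)^2/2) := by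
  have hint1 : Integrable ((Ici γ).indicator (gaussianPDFReal 0 1)) :=
    (integrable_gaussianPDFReal 0 1).indicator measurableSet_Ici
  have hint2 : Integrable ((Iic (-(k*γ))).indicator (gaussianPDFReal 0 1)) :=
    (integrable_gaussianPDFReal 0 1).indicator measurableSet_Iic
  have hptw : ∀ x, indS γ k x * gaussianPDFReal 0 1 x
      ≤ (Ici γ).indicator (gaussianPDFReal 0 1) x
        + (Iic (-(k*γ))).indicator (gaussianPDFReal 0 1) x := by
    intro x
    have hpdf := gaussianPDFReal_nonneg 0 1 x
    unfold indS
    by_cases h1 : γ ≤ x <;> by_cases h2 : x ≤ -(k*γ) <;>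
      simp [Set.indicator_apply, h1, h2] <;> linarith
  calc ∫ x, indS γ k x * gaussianPDFReal 0 1 x
      ≤ ∫ x, ((Ici γ).indicator (gaussianPDFReal 0 1) x
          + (Iic (-(k*γ))).indicator (gaussianPDFReal 0 1) x) :=
        integral_mono (indS_mul_pdf_integrable γ k 0) (hint1.add hint2) hptw
    _ = (∫ x in Ici γ, gaussianPDFReal 0 1 x) + ∫ x in Iic (-(k*γ)), gaussianPDFReal 0 1 x := by
        rw [integral_add hint1 hint2, integral_indicator measurableSet_Ici,
          integral_indicator measurableSet_Iic]
    _ ≤ Real.exp (-γ^2/2) + Real.exp (-(k*γ)^2/2) :=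
        add_le_add (tail_Ici γ hγ) (tail_Iic (k*γ) hkγ)

lemma I_ge (γ k : ℝ) (hγ : 0 ≤ γ) :
    (Real.sqrt (2*π))⁻¹ * Real.exp (-(γ+1)^2/2)
      ≤ ∫ x, indS γ k x * gaussianPDFReal 0 1 x := by
  have hvol : (volume (Icc γ (γ+1))).toReal = 1 := by
    rw [Real.volume_Icc]; simp
  have hlow : ∀ x ∈ Icc γ (γ+1),
      (Real.sqrt (2*π))⁻¹ * Real.exp (-(γ+1)^2/2) ≤ indS γ k x * gaussianPDFReal 0 1 x := by
    intro x hx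
    obtain ⟨hx1, hx2⟩ := hx
    have hind : indS γ k x = 1 := by unfold indS; rw [if_pos (Or.inl hx1)]
    rw [hind, one_mul, pdf_one]
    refine mul_le_mul_of_nonneg_left (Real.exp_le_exp.mpr ?_) (by positivity)
    nlinarith
  calc (Real.sqrt (2*π))⁻¹ * Real.exp (-(γ+1)^2/2)
      = ((Real.sqrt (2*π))⁻¹ * Real.exp (-(γ+1)^2/2)) * (volume (Icc γ (γ+1))).toReal := by
        rw [hvol, mul_one]
    _ ≤ ∫ x in Icc γ (γ+1), indS γ k x * gaussianPDFReal 0 1 x :=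
        setIntegral_ge_of_const_le_real measurableSet_Icc measure_Icc_lt_top.ne hlow
          (indS_mul_pdf_integrable γ k 0).integrableOn
    _ ≤ ∫ x, indS γ k x * gaussianPDFReal 0 1 x :=
        setIntegral_le_integral (indS_mul_pdf_integrable γ k 0)
          (Filter.Eventually.of_forall fun x =>
            mul_nonneg (indS_nonneg γ k x) (gaussianPDFReal_nonneg 0 1 x))

lemma J_ge (γ k : ℝ) (hγ : 0 ≤ γ) :
    (Real.sqrt (2*π))⁻¹ * Real.exp (-((abs (1-k))*γ+1)^2/2)
      ≤ ∫ x, indS γ k x * gaussianPDFReal (-γ) 1 x := by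
  have hvol : (volume (Icc (-(k*γ)-1) (-(k*γ)))).toReal = 1 := by
    rw [Real.volume_Icc]
    norm_num
  have hlow : ∀ x ∈ Icc (-(k*γ)-1) (-(k*γ)),
      (Real.sqrt (2*π))⁻¹ * Real.exp (-((abs (1-k))*γ+1)^2/2)
        ≤ indS γ k x * gaussianPDFReal (-γ) 1 x := by
    intro x hx
    obtain ⟨hx1, hx2⟩ := hx
    have hind : indS γ k x = 1 := by unfold indS; rw [if_pos (Or.inr hx2)]
    rw [hind, one_mul, pdf_one]
    refine mul_le_mul_of_nonneg_left (Real.exp_le_exp.mpr ?_) (by positivity)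
    have h1 : (1-k)*γ ≤ (abs (1-k))*γ := mul_le_mul_of_nonneg_right (le_abs_self _) hγ
    have h2 : -((abs (1-k)))*γ ≤ (1-k)*γ := mul_le_mul_of_nonneg_right (neg_abs_le _) hγ
    have hsq : (x-(-γ))^2 ≤ ((abs (1-k))*γ+1)^2 := by
      apply sq_le_sq'
      · nlinarith
      · nlinarith
    linarith
  calc (Real.sqrt (2*π))⁻¹ * Real.exp (-((abs (1-k))*γ+1)^2/2)
      = ((Real.sqrt (2*π))⁻¹ * Real.exp (-((abs (1-k))*γ+1)^2/2))
          * (volume (Icc (-(k*γ)-1) (-(k*γ)))).toReal := by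
        rw [hvol, mul_one]
    _ ≤ ∫ x in Icc (-(k*γ)-1) (-(k*γ)), indS γ k x * gaussianPDFReal (-γ) 1 x :=
        setIntegral_ge_of_const_le_real measurableSet_Icc measure_Icc_lt_top.ne hlow
          (indS_mul_pdf_integrable γ k (-γ)).integrableOn
    _ ≤ ∫ x, indS γ k x * gaussianPDFReal (-γ) 1 x :=
        setIntegral_le_integral (indS_mul_pdf_integrable γ k (-γ))
          (Filter.Eventually.of_forall fun x =>
            mul_nonneg (indS_nonneg γ k x) (gaussianPDFReal_nonneg (-γ) 1 x))


set_option maxHeartbeats 1000000 in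
/-- For `0 < k < 3`, the relative second moment `E[Z²]/E[Z]²` of the IS estimator with the
missed dominating point grows exponentially in `γ`: there are `c, γ₀ > 0` with
`E[Z²]/E[Z]² ≥ e^{cγ²}` for all `γ ≥ γ₀`. -/
theorem stmt4 (k : ℝ) (hk : k ∈ Set.Ioo (0 : ℝ) 3) :
    ∃ c γ₀ : ℝ, 0 < c ∧ 0 < γ₀ ∧ ∀ γ ≥ γ₀,
      Real.exp (c * γ ^ 2) ≤
        (∫ x, (Zfun γ k x) ^ 2 ∂(gaussianReal γ 1)) /
          (∫ x, Zfun γ k x ∂(gaussianReal γ 1)) ^ 2 := by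
  obtain ⟨hk0, hk3⟩ := hk
  obtain ⟨m, hm_def⟩ : ∃ m : ℝ, m = min k 1 := ⟨_, rfl⟩
  obtain ⟨b, hb_def⟩ : ∃ b : ℝ, b = |1 - k| := ⟨_, rfl⟩
  obtain ⟨A, hA_def⟩ : ∃ A : ℝ, A = 1 + m^2 - (1-k)^2/2 := ⟨_, rfl⟩
  have hm0 : 0 < m := by rw [hm_def]; exact lt_min hk0 one_pos
  have hmk : m ≤ k := by rw [hm_def]; exact min_le_left _ _
  have hm1 : m ≤ 1 := by rw [hm_def]; exact min_le_right _ _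
  have hb0 : 0 ≤ b := by rw [hb_def]; exact abs_nonneg _
  have hbsq : b^2 = (1-k)^2 := by rw [hb_def]; exact sq_abs _
  have hA : 0 < A := by
    rcases le_total k 1 with h | h
    · have hm : m = k := by rw [hm_def]; exact min_eq_left h
      rw [hA_def, hm]
      nlinarith [sq_nonneg (1+k)]
    · have hm : m = 1 := by rw [hm_def]; exact min_eq_right h
      rw [hA_def, hm]
      nlinarith
  refine ⟨A/2, max 1 (max (1/k) ((2*(b+12))/A)), by positivity, by positivity, fun γ hγ => ?_⟩
  have hγ1 : 1 ≤ γ := le_trans (le_max_left _ _) hγ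
  have hγ0 : 0 ≤ γ := by linarith
  have hγk : 1 ≤ k * γ := by
    have := le_trans (le_trans (le_max_left _ _) (le_max_right 1 _)) hγ
    rw [div_le_iff₀ hk0] at this
    nlinarith
  have hγb : b*γ + 12 ≤ (A/2)*γ^2 := by
    have h1 : (2*(b+12))/A ≤ γ := le_trans (le_trans (le_max_right _ _) (le_max_right 1 _)) hγ
    rw [div_le_iff₀ hA] at h1
    have h2 := mul_le_mul_of_nonneg_right h1 hγ0
    have h3 : b * γ + 12 * γ ≤ A/2 * γ^2 := by nlinarith
    nlinarith
  -- rewrite the integrals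
  have hIeq : ∫ x, Zfun γ k x ∂(gaussianReal γ 1) = ∫ x, indS γ k x * gaussianPDFReal 0 1 x := by
    rw [integral_gaussianReal_eq]
    exact integral_congr_ae (Filter.Eventually.of_forall fun x => hZ1 γ k x)
  have hJeq : ∫ x, (Zfun γ k x)^2 ∂(gaussianReal γ 1)
      = Real.exp (γ^2) * ∫ x, indS γ k x * gaussianPDFReal (-γ) 1 x := by
    rw [integral_gaussianReal_eq, ← integral_const_mul]
    exact integral_congr_ae (Filter.Eventually.of_forall fun x => hZ2 γ k x)
  obtain ⟨I, hI_def⟩ : ∃ I, ∫ x, indS γ k x * gaussianPDFReal 0 1 x = I := ⟨_, rfl⟩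
  obtain ⟨J, hJ_def⟩ : ∃ J, ∫ x, indS γ k x * gaussianPDFReal (-γ) 1 x = J := ⟨_, rfl⟩
  rw [hIeq, hJeq, hI_def, hJ_def]
  have hIpos : 0 < I := by
    rw [← hI_def]
    exact lt_of_lt_of_le (by positivity) (I_ge γ k hγ0)
  have hIub : I ≤ 2 * Real.exp (-(m^2*γ^2)/2) := by
    rw [← hI_def]
    refine le_trans (I_le γ k hγ1 hγk) ?_
    have e1 : Real.exp (-γ^2/2) ≤ Real.exp (-(m^2*γ^2)/2) :=
      Real.exp_le_exp.mpr (by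
        nlinarith [mul_nonneg (by nlinarith : (0:ℝ) ≤ 1 - m^2) (sq_nonneg γ)])
    have e2 : Real.exp (-(k*γ)^2/2) ≤ Real.exp (-(m^2*γ^2)/2) :=
      Real.exp_le_exp.mpr (by
        nlinarith [mul_nonneg (by nlinarith : (0:ℝ) ≤ k^2 - m^2) (sq_nonneg γ)])
    linarith
  rw [le_div_iff₀ (pow_pos hIpos 2)]
  have hsqrt3 : Real.sqrt (2*π) ≤ 3 := by
    rw [show (3:ℝ) = Real.sqrt 9 by
      rw [show (9:ℝ) = 3^2 by norm_num, Real.sqrt_sq (by norm_num)]]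
    exact Real.sqrt_le_sqrt (by nlinarith [pi_le_four])
  have hsqrtpos : 0 < Real.sqrt (2*π) := Real.sqrt_pos.mpr (by positivity)
  have key : Real.exp (A/2 * γ^2) * (2 * Real.exp (-(m^2*γ^2)/2))^2
      ≤ (Real.sqrt (2*π))⁻¹ * Real.exp (γ^2 - (b*γ+1)^2/2) := by
    have lhs_eq : Real.exp (A/2 * γ^2) * (2 * Real.exp (-(m^2*γ^2)/2))^2
        = 4 * Real.exp (A/2*γ^2 - m^2*γ^2) := by
      have h2 : (Real.exp (-(m^2*γ^2)/2))^2 = Real.exp (-(m^2*γ^2)) := by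
        rw [sq, ← Real.exp_add]; congr 1; ring
      have h3 : Real.exp (A/2*γ^2) * Real.exp (-(m^2*γ^2)) = Real.exp (A/2*γ^2 - m^2*γ^2) := by
        rw [← Real.exp_add, sub_eq_add_neg]
      rw [mul_pow, h2]
      linear_combination 4 * h3
    have hD : A/2*γ^2 - m^2*γ^2 + 11 ≤ γ^2 - (b*γ+1)^2/2 := by nlinarith [hγb, hbsq]
    have h12 : 12 * Real.exp (A/2*γ^2 - m^2*γ^2) ≤ Real.exp (γ^2 - (b*γ+1)^2/2) := by
      have he11 : (12:ℝ) ≤ Real.exp 11 := by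
        have := Real.add_one_le_exp (11:ℝ)
        linarith
      calc 12 * Real.exp (A/2*γ^2 - m^2*γ^2)
          ≤ Real.exp 11 * Real.exp (A/2*γ^2 - m^2*γ^2) :=
            mul_le_mul_of_nonneg_right he11 (Real.exp_pos _).le
        _ = Real.exp (11 + (A/2*γ^2 - m^2*γ^2)) := by rw [← Real.exp_add]
        _ ≤ Real.exp (γ^2 - (b*γ+1)^2/2) := Real.exp_le_exp.mpr (by linarith)
    have hinv : (1/3 : ℝ) ≤ (Real.sqrt (2*π))⁻¹ := by
      rw [show (1/3 : ℝ) = (3:ℝ)⁻¹ by norm_num]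
      exact inv_anti₀ hsqrtpos hsqrt3
    calc Real.exp (A/2 * γ^2) * (2 * Real.exp (-(m^2*γ^2)/2))^2
        = (1/3) * (12 * Real.exp (A/2*γ^2 - m^2*γ^2)) := by rw [lhs_eq]; ring
      _ ≤ (Real.sqrt (2*π))⁻¹ * Real.exp (γ^2 - (b*γ+1)^2/2) := by
          apply mul_le_mul hinv h12 (by positivity) (by positivity)
  calc Real.exp (A/2 * γ^2) * I^2
      ≤ Real.exp (A/2 * γ^2) * (2 * Real.exp (-(m^2*γ^2)/2))^2 := by
        apply mul_le_mul_of_nonneg_left _ (Real.exp_pos _).le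
        exact pow_le_pow_left₀ hIpos.le hIub 2
    _ ≤ (Real.sqrt (2*π))⁻¹ * Real.exp (γ^2 - (b*γ+1)^2/2) := key
    _ ≤ Real.exp (γ^2) * J := by
        have := J_ge γ k hγ0
        calc (Real.sqrt (2*π))⁻¹ * Real.exp (γ^2 - (b*γ+1)^2/2)
            = Real.exp (γ^2) * ((Real.sqrt (2*π))⁻¹ * Real.exp (-(b*γ+1)^2/2)) := by
              rw [show Real.exp (γ^2 - (b*γ+1)^2/2)
                  = Real.exp (γ^2) * Real.exp (-(b*γ+1)^2/2) by
                rw [← Real.exp_add]; congr 1; ring]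
              ring
          _ ≤ Real.exp (γ^2) * J := by
              refine mul_le_mul_of_nonneg_left ?_ (Real.exp_pos _).le
              rw [← hJ_def, hb_def]
              exact this

end Aux
end

section
/- (Boundary layer volume bound) Let $S \subset [0,M]^d$ have orthogonally monotone complement within $[0,M]^d$, and define $B_t = \{x \in S^c : x + t\mathbf{1} \in S^c\}$. Then $\mathrm{Vol}(S^c \setminus B_t) \leq t\sqrt{d} \cdot M^{d-1}\left(\frac{\sqrt{d}}{2}\right)^{d-1} w_{d-1}$, where $w_{d-1}$ is the volume of the unit ball in $\mathbb{R}^{d-1}$. -/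
open MeasureTheory

/-- The nonnegative orthant `ℝ₊^d`. -/
def Orthant (d : ℕ) : Set (Fin d → ℝ) := {x | ∀ i, 0 ≤ x i}

noncomputable def Tmap (n : ℕ) (c : ℝ) : (Fin n → ℝ) →ₗ[ℝ] (Fin n → ℝ) where
  toFun z := fun i => z i + c * (∑ j, z j)
  map_add' x y := by
    funext i
    simp [Finset.sum_add_distrib]
    ring
  map_smul' a x := by
    funext i
    simp [Finset.mul_sum, mul_add, mul_left_comm]

lemma Tmap_apply (n : ℕ) (c : ℝ) (z : Fin n → ℝ) (i : Fin n) :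
    Tmap n c z i = z i + c * (∑ j, z j) := rfl

lemma Tmap_det (n : ℕ) (c : ℝ) : LinearMap.det (Tmap n c) = 1 + n * c := by
  rw [← LinearMap.det_toMatrix (Pi.basisFun ℝ (Fin n))]
  have : LinearMap.toMatrix (Pi.basisFun ℝ (Fin n)) (Pi.basisFun ℝ (Fin n)) (Tmap n c)
      = 1 + Matrix.replicateCol Unit (fun _ => c) * Matrix.replicateRow Unit (fun _ => (1:ℝ)) := by
    ext i j
    simp only [LinearMap.toMatrix_apply, Pi.basisFun_apply, Pi.basisFun_repr, Tmap_apply,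
      Matrix.add_apply, Matrix.mul_apply, Matrix.replicateCol_apply, Matrix.replicateRow_apply,
      Finset.univ_unique, Finset.sum_const, Finset.card_singleton, one_smul]
    rw [Pi.single_apply]
    have : (∑ k, Pi.single j (1:ℝ) k) = 1 := by
      rw [Finset.sum_eq_single j (fun b _ hb => Pi.single_eq_of_ne hb 1) (by simp), Pi.single_eq_same]
    simp [this, Matrix.one_apply]
  rw [this, Matrix.det_one_add_replicateCol_mul_replicateRow]
  simp [dotProduct, mul_comm]

lemma volE (n : ℕ) (M : ℝ) (hM : 0 < M) :
    volume {y : Fin n → ℝ | (∑ j, (y j)^2) - (∑ j, y j)^2/((n:ℝ)+1) ≤ ((n:ℝ)+1)*M^2/4}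
      ≤ ENNReal.ofReal (Real.sqrt ((n:ℝ)+1)) *
        (ENNReal.ofReal ((M * Real.sqrt ((n:ℝ)+1)/2)^n) *
          volume (Metric.ball (0 : EuclideanSpace ℝ (Fin n)) 1)) := by
  have hn1 : (0:ℝ) < (n:ℝ)+1 := by positivity
  set u := Real.sqrt ((n:ℝ)+1) with hu
  have hu2 : u^2 = (n:ℝ)+1 := Real.sq_sqrt hn1.le
  have hu0 : 0 < u := Real.sqrt_pos.mpr hn1
  have hncast : (n:ℝ) = u^2 - 1 := by rw [hu2]; ring
  set r := M * u / 2 with hr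
  have hr0 : 0 < r := by positivity
  set c : ℝ := 1/(u+1) with hc
  set c' : ℝ := -(1/(u*(u+1))) with hc'
  have hune : u ≠ 0 := hu0.ne'
  have hu1ne : u + 1 ≠ 0 := by positivity
  -- sum expansion helper
  have expand : ∀ (y : Fin n → ℝ) (a : ℝ), (∑ j, (y j + a)^2)
      = (∑ j, (y j)^2) + 2*a*(∑ j, y j) + (n:ℝ) * a^2 := by
    intro y a
    have : ∀ j : Fin n, (y j + a)^2 = (y j)^2 + (2*a) * (y j) + a^2 := fun j => by ring
    simp_rw [this]
    rw [Finset.sum_add_distrib, Finset.sum_add_distrib, ← Finset.mul_sum,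
      Finset.sum_const, Finset.card_univ, Fintype.card_fin, nsmul_eq_mul]
  have hscalar1 : 2*c' + (n:ℝ)*c'^2 = -(1/((n:ℝ)+1)) := by
    rw [hncast, hc']
    field_simp
    ring
  have hscalar2 : c' + c + c*(n:ℝ)*c' = 0 := by
    rw [hncast, hc', hc]
    field_simp
    ring
  have hsum' : ∀ y : Fin n → ℝ, (∑ j, (Tmap n c' y) j) = (1 + (n:ℝ)*c') * (∑ j, y j) := by
    intro y
    simp_rw [Tmap_apply]
    rw [Finset.sum_add_distrib, Finset.sum_const, Finset.card_univ, Fintype.card_fin,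
      nsmul_eq_mul]
    ring
  have hsub : {y : Fin n → ℝ | (∑ j, (y j)^2) - (∑ j, y j)^2/((n:ℝ)+1) ≤ ((n:ℝ)+1)*M^2/4}
      ⊆ (Tmap n c) '' {z : Fin n → ℝ | (∑ j, (z j)^2) ≤ r^2} := by
    intro y hy
    simp only [Set.mem_setOf_eq] at hy
    refine ⟨Tmap n c' y, ?_, ?_⟩
    · simp only [Set.mem_setOf_eq]
      have h1 : (∑ j, ((Tmap n c' y) j)^2) = (∑ j, (y j)^2)
          - (∑ j, y j)^2/((n:ℝ)+1) := by
        simp_rw [Tmap_apply]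
        rw [expand y (c' * (∑ j, y j))]
        linear_combination (∑ j, y j)^2 * hscalar1
      have h2 : r^2 = ((n:ℝ)+1)*M^2/4 := by
        rw [hr, ← hu2]; ring
      rw [h1, h2]; exact hy
    · funext i
      rw [Tmap_apply, hsum', Tmap_apply]
      have h0 : c' + c*(1 + (n:ℝ)*c') = 0 := by ring_nf; ring_nf at hscalar2; linarith
      linear_combination (∑ j, y j) * h0
  have hBmeas : MeasurableSet {z : Fin n → ℝ | (∑ j, (z j)^2) ≤ r^2} := by
    refine (isClosed_le ?_ continuous_const).measurableSet
    exact continuous_finset_sum _ fun j _ => (continuous_apply j).pow 2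
  have hdet : LinearMap.det (Tmap n c) = u := by
    rw [Tmap_det, hncast, hc]
    field_simp
    ring
  calc volume {y : Fin n → ℝ | (∑ j, (y j)^2) - (∑ j, y j)^2/((n:ℝ)+1) ≤ ((n:ℝ)+1)*M^2/4}
      ≤ volume ((Tmap n c) '' {z : Fin n → ℝ | (∑ j, (z j)^2) ≤ r^2}) := measure_mono hsub
    _ = ENNReal.ofReal |LinearMap.det (Tmap n c)| *
          volume {z : Fin n → ℝ | (∑ j, (z j)^2) ≤ r^2} :=
        Measure.addHaar_image_linearMap volume _ _
    _ = ENNReal.ofReal u * volume {z : Fin n → ℝ | (∑ j, (z j)^2) ≤ r^2} := by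
        rw [hdet, abs_of_pos hu0]
    _ = ENNReal.ofReal u * volume (Metric.closedBall (0 : EuclideanSpace ℝ (Fin n)) r) := by
        congr 1
        rw [← (EuclideanSpace.volume_preserving_symm_measurableEquiv_toLp (Fin n)).measure_preimage
          hBmeas.nullMeasurableSet]
        congr 1
        ext z
        simp only [Set.mem_preimage, Set.mem_setOf_eq, Metric.mem_closedBall,
          dist_zero_right, EuclideanSpace.norm_eq, Real.norm_eq_abs, sq_abs,
          Real.sqrt_le_iff, MeasurableEquiv.coe_toLp_symm]
        exact ⟨fun h => ⟨hr0.le, h⟩, fun h => h.2⟩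
    _ = ENNReal.ofReal u * (ENNReal.ofReal (r^n) *
          volume (Metric.ball (0 : EuclideanSpace ℝ (Fin n)) 1)) := by
        rw [Measure.addHaar_closedBall volume 0 hr0.le, finrank_euclideanSpace_fin]

noncomputable def shearL (n : ℕ) : (Fin (n+1) → ℝ) →ₗ[ℝ] (Fin (n+1) → ℝ) where
  toFun x := fun i => x i + if i = Fin.last n then 0 else x (Fin.last n)
  map_add' x y := by funext i; by_cases h : i = Fin.last n <;> simp [h] <;> ring
  map_smul' c x := by funext i; by_cases h : i = Fin.last n <;> simp [h] <;> ring

lemma shearL_det (n : ℕ) : LinearMap.det (shearL n) = 1 := by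
  rw [← LinearMap.det_toMatrix (Pi.basisFun ℝ (Fin (n+1)))]
  have ht : (LinearMap.toMatrix (Pi.basisFun ℝ (Fin (n+1))) (Pi.basisFun ℝ (Fin (n+1)))
      (shearL n)).BlockTriangular id := by
    intro i j hij
    have hij' : (j : Fin (n+1)) < i := hij
    simp only [LinearMap.toMatrix_apply, Pi.basisFun_apply, Pi.basisFun_repr, shearL,
      LinearMap.coe_mk, AddHom.coe_mk]
    rw [Pi.single_apply, Pi.single_apply]
    have h1 : j ≠ i := ne_of_lt hij'
    have h2 : j ≠ Fin.last n := by
      intro h; subst h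
      exact absurd (Fin.le_last i) (not_le.mpr hij')
    by_cases h3 : i = Fin.last n <;> simp [h1.symm, h3, Ne.symm h2]
  rw [Matrix.det_of_upperTriangular ht]
  apply Finset.prod_eq_one
  intro i _
  simp only [LinearMap.toMatrix_apply, Pi.basisFun_apply, Pi.basisFun_repr, shearL,
    LinearMap.coe_mk, AddHom.coe_mk]
  by_cases h : i = Fin.last n <;> simp [h, Pi.single_apply]

/-- Boundary layer volume bound: if `Scomp ⊆ [0,M]^d` is downward closed (the complement
of an orthogonally monotone set within the box) and `B_t = {x ∈ Scomp : x + t·𝟏 ∈ Scomp}`,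
then `Vol(Scomp \ B_t) ≤ t√d · M^{d-1} (√d/2)^{d-1} w_{d-1}`, where `w_{d-1}` is the
volume of the unit ball in `ℝ^{d-1}`. -/
theorem stmt16 (d : ℕ) (hd : 0 < d) (M t : ℝ) (hM : 0 < M) (ht : 0 < t)
    (Scomp : Set (Fin d → ℝ))
    (hbox : Scomp ⊆ Set.Icc 0 (fun _ => M))
    (hdc : ∀ x ∈ Scomp, ∀ y : Fin d → ℝ, y ∈ Orthant d → y ≤ x → y ∈ Scomp) :
    (volume (Scomp \ {x ∈ Scomp | x + t • (fun _ => (1 : ℝ)) ∈ Scomp})).toReal ≤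
      t * Real.sqrt d * M ^ (d - 1) * (Real.sqrt d / 2) ^ (d - 1) *
        (volume (Metric.ball (0 : EuclideanSpace ℝ (Fin (d - 1))) 1)).toReal := by
  obtain ⟨n, rfl⟩ : ∃ n, d = n + 1 := ⟨d - 1, (Nat.succ_pred_eq_of_pos hd).symm⟩
  simp only [Nat.add_sub_cancel]
  have hn1 : (0:ℝ) < (n:ℝ)+1 := by positivity
  set u := Real.sqrt ((n:ℝ)+1) with hu
  have hu2 : u^2 = (n:ℝ)+1 := Real.sq_sqrt hn1.le
  have hu0 : 0 < u := Real.sqrt_pos.mpr hn1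
  -- the closed superset machinery
  set C := closure Scomp with hC
  have hCbox : C ⊆ Set.Icc 0 (fun _ => M) := closure_minimal hbox isClosed_Icc
  set D := {v : Fin (n+1) → ℝ | ∃ w ∈ C, ∀ i, v i < w i} with hD
  have hDopen : IsOpen D := by
    rw [show D = ⋃ w ∈ C, {v : Fin (n+1) → ℝ | ∀ i, v i < w i} by
      ext v; simp [hD, Set.mem_iUnion]]
    refine isOpen_biUnion fun w _ => ?_
    rw [show {v : Fin (n+1) → ℝ | ∀ i, v i < w i} = ⋂ i, {v | v i < w i} by ext; simp]
    exact isOpen_iInter_of_finite fun i => isOpen_lt (continuous_apply i) continuous_const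
  have hlt_mem : ∀ v w : Fin (n+1) → ℝ, w ∈ C → (∀ i, v i < w i) → v ∈ D :=
    fun v w hw h => ⟨w, hw, h⟩
  -- D points above box points are in Scomp
  have hDS : ∀ x : Fin (n+1) → ℝ, x ∈ Set.Icc 0 (fun _ => M) →
      x + t • (fun _ => (1:ℝ)) ∈ D → x + t • (fun _ => (1:ℝ)) ∈ Scomp := by
    intro x hx hxD
    obtain ⟨w, hwC, hlt⟩ := hxD
    set v := x + t • (fun _ => (1:ℝ)) with hv
    have hvx : ∀ i, v i = x i + t := fun i => by simp [hv]
    have hne : (Finset.univ : Finset (Fin (n+1))).Nonempty := Finset.univ_nonempty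
    set ε := Finset.univ.inf' hne (fun i => w i - v i) with hε
    have hεpos : 0 < ε := by
      rw [hε, Finset.lt_inf'_iff]
      intro i _
      exact sub_pos.mpr (hlt i)
    obtain ⟨z, hz, hdist⟩ := Metric.mem_closure_iff.mp hwC ε hεpos
    have hdist' : ∀ i, dist (w i) (z i) < ε := fun i => (dist_pi_lt_iff hεpos).mp hdist i
    have hvz : v ≤ z := by
      intro i
      have h1 : ε ≤ w i - v i := Finset.inf'_le _ (Finset.mem_univ i)
      have h2 : |w i - z i| < ε := by rw [← Real.dist_eq]; exact hdist' i
      have := abs_lt.mp h2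
      linarith [this.1, this.2]
    have hvo : v ∈ Orthant (n+1) := by
      intro i
      have := hx.1 i
      rw [hvx i]
      simp only [Pi.zero_apply] at this
      linarith
    exact hdc z hz v hvo hvz
  set A₂ := C ∩ {x : Fin (n+1) → ℝ | x + t • (fun _ => (1:ℝ)) ∉ D} with hA2
  have hA2meas : MeasurableSet A₂ := by
    refine isClosed_closure.measurableSet.inter ?_
    have : Continuous fun x : Fin (n+1) → ℝ => x + t • (fun _ => (1:ℝ)) :=
      continuous_id.add continuous_const
    exact ((hDopen.preimage this).measurableSet).compl
  have hAsub : Scomp \ {x ∈ Scomp | x + t • (fun _ => (1 : ℝ)) ∈ Scomp} ⊆ A₂ := by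
    rintro x ⟨hx1, hx2⟩
    refine ⟨subset_closure hx1, fun hxD => ?_⟩
    exact hx2 ⟨hx1, hDS x (hbox hx1) hxD⟩
  -- measure-preserving parametrization
  set e := MeasurableEquiv.piFinSuccAbove (fun _ : Fin (n+1) => ℝ) (Fin.last n) with he
  set Φ : (Fin n → ℝ) × ℝ → (Fin (n+1) → ℝ) :=
    fun p => shearL n (e.symm (p.2, p.1)) with hΦ
  have hLmeas : Measurable (shearL n) :=
    (shearL n).continuous_of_finiteDimensional.measurable
  have hLmap : Measure.map (shearL n) volume = volume := by
    rw [Real.map_linearMap_volume_pi_eq_smul_volume_pi (by rw [shearL_det]; exact one_ne_zero),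
      shearL_det]
    simp
  have hL : MeasurePreserving (shearL n) volume volume := ⟨hLmeas, hLmap⟩
  have hesymm : MeasurePreserving e.symm volume volume :=
    (volume_preserving_piFinSuccAbove (fun _ : Fin (n+1) => ℝ) (Fin.last n)).symm _
  have hswap : MeasurePreserving (Prod.swap : (Fin n → ℝ) × ℝ → ℝ × (Fin n → ℝ))
      volume volume := by
    rw [Measure.volume_eq_prod, Measure.volume_eq_prod]
    exact Measure.measurePreserving_swap
  have hΦmp : MeasurePreserving Φ volume volume := (hL.comp hesymm).comp hswap
  -- pointwise values of Φ
  have hlast : ∀ (y : Fin n → ℝ) (s : ℝ), Φ (y, s) (Fin.last n) = s := by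
    intro y s
    simp [hΦ, shearL, he, MeasurableEquiv.piFinSuccAbove_symm_apply]
  have hcast : ∀ (y : Fin n → ℝ) (s : ℝ) (j : Fin n), Φ (y, s) (Fin.castSucc j) = y j + s := by
    intro y s j
    have h1 : Fin.castSucc j ≠ Fin.last n := (Fin.castSucc_lt_last j).ne
    simp [hΦ, shearL, he, MeasurableEquiv.piFinSuccAbove_symm_apply, h1,
      Fin.snoc_castSucc, Fin.snoc_last]
  -- slice bound
  set E : Set (Fin n → ℝ) :=
    {y | (∑ j, (y j)^2) - (∑ j, y j)^2/((n:ℝ)+1) ≤ ((n:ℝ)+1)*M^2/4} with hEdef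
  have hEmeas : MeasurableSet E := by
    refine (isClosed_le ?_ continuous_const).measurableSet
    exact ((continuous_finset_sum _ fun j _ => (continuous_apply j).pow 2).sub
      (((continuous_finset_sum _ fun j _ => continuous_apply j).pow 2).div_const _))
  have hgap : ∀ (y : Fin n → ℝ) (s s' : ℝ), Φ (y, s) ∈ A₂ → Φ (y, s') ∈ A₂ → s' - s ≤ t := by
    intro y s s' hs hs'
    by_contra hcon
    push_neg at hcon
    refine hs.2 (hlt_mem _ (Φ (y, s')) hs'.1 fun i => ?_)
    have hadd : ∀ i : Fin (n+1),
        (Φ (y, s) + t • (fun _ => (1:ℝ)) : Fin (n+1) → ℝ) i = Φ (y, s) i + t := by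
      intro i; simp
    rw [hadd i]
    induction i using Fin.lastCases with
    | last => rw [hlast, hlast]; linarith
    | cast j => rw [hcast, hcast]; linarith
  have hproj : ∀ (y : Fin n → ℝ) (s : ℝ), Φ (y, s) ∈ A₂ → y ∈ E := by
    intro y s hmem
    have hxbox := hCbox hmem.1
    set x := Φ (y, s) with hx
    have hx0 : ∀ i, 0 ≤ x i := fun i => by
      have := hxbox.1 i; simpa using this
    have hxM : ∀ i, x i ≤ M := fun i => by
      have := hxbox.2 i; simpa using this
    have hyj : ∀ j, y j = x (Fin.castSucc j) - x (Fin.last n) := by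
      intro j; rw [hx, hcast, hlast]; ring
    set X := ∑ i, x i with hX
    set S := x (Fin.last n) with hS
    have hsplit : X = (∑ j : Fin n, x (Fin.castSucc j)) + S := Fin.sum_univ_castSucc x
    have hsplit2 : (∑ i, (x i)^2) = (∑ j : Fin n, (x (Fin.castSucc j))^2) + S^2 :=
      Fin.sum_univ_castSucc (fun i => (x i)^2)
    have hsum1 : (∑ j, y j) = X - ((n:ℝ)+1) * S := by
      simp_rw [hyj]
      rw [Finset.sum_sub_distrib, Finset.sum_const, Finset.card_univ, Fintype.card_fin,
        nsmul_eq_mul]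
      rw [hsplit]; push_cast; ring
    have hsum2 : (∑ j, (y j)^2) = (∑ i, (x i)^2) - 2*S*X + ((n:ℝ)+1)*S^2 := by
      have : ∀ j : Fin n, (y j)^2 = (x (Fin.castSucc j))^2 - (2*S) * x (Fin.castSucc j)
          + S^2 := by
        intro j; rw [hyj]; ring
      simp_rw [this]
      rw [Finset.sum_add_distrib, Finset.sum_sub_distrib, ← Finset.mul_sum,
        Finset.sum_const, Finset.card_univ, Fintype.card_fin, nsmul_eq_mul]
      have h1 : (∑ j : Fin n, x (Fin.castSucc j)) = X - S := by rw [hsplit]; ring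
      have h2 : (∑ j : Fin n, (x (Fin.castSucc j))^2) = (∑ i, (x i)^2) - S^2 := by
        rw [hsplit2]; ring
      rw [h1, h2]; push_cast; ring
    have hsumsq : (∑ i, (x i)^2) ≤ M * X := by
      rw [hX, Finset.mul_sum]
      refine Finset.sum_le_sum fun i _ => ?_
      nlinarith [hx0 i, hxM i]
    have hXnn : 0 ≤ X := Finset.sum_nonneg fun i _ => hx0 i
    show (∑ j, (y j)^2) - (∑ j, y j)^2/((n:ℝ)+1) ≤ ((n:ℝ)+1)*M^2/4
    have hdiv : (∑ j, y j)^2/((n:ℝ)+1) * ((n:ℝ)+1) = (∑ j, y j)^2 :=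
      div_mul_cancel₀ _ hn1.ne'
    rw [hsum1, hsum2]
    have key : ((n:ℝ)+1) * ((∑ i, (x i)^2) - 2*S*X + ((n:ℝ)+1)*S^2
        - (X - ((n:ℝ)+1)*S)^2/((n:ℝ)+1)) ≤ ((n:ℝ)+1) * (((n:ℝ)+1)*M^2/4) := by
      have hdiv2 : (X - ((n:ℝ)+1)*S)^2/((n:ℝ)+1) * ((n:ℝ)+1) = (X - ((n:ℝ)+1)*S)^2 :=
        div_mul_cancel₀ _ hn1.ne'
      nlinarith [sq_nonneg (X - ((n:ℝ)+1)*M/2), mul_le_mul_of_nonneg_left hsumsq hn1.le]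
    exact le_of_mul_le_mul_left key hn1
  have hslice : ∀ y : Fin n → ℝ, volume {s : ℝ | Φ (y, s) ∈ A₂}
      ≤ E.indicator (fun _ => ENNReal.ofReal t) y := by
    intro y
    by_cases hne : ∃ s, Φ (y, s) ∈ A₂
    · obtain ⟨s₀, hs₀⟩ := hne
      rw [Set.indicator_of_mem (hproj y s₀ hs₀)]
      refine le_trans (Real.volume_le_diam _) (EMetric.diam_le fun s hs s' hs' => ?_)
      rw [edist_dist]
      refine ENNReal.ofReal_le_ofReal ?_
      rw [Real.dist_eq]
      exact abs_le.mpr ⟨by linarith [hgap y s s' hs hs'], by linarith [hgap y s' s hs' hs]⟩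
    · push_neg at hne
      have : {s : ℝ | Φ (y, s) ∈ A₂} = ∅ := Set.eq_empty_iff_forall_notMem.mpr hne
      rw [this]
      simp
  have hA2vol : volume A₂ = ∫⁻ y : Fin n → ℝ, volume {s : ℝ | Φ (y, s) ∈ A₂} := by
    rw [← hΦmp.measure_preimage hA2meas.nullMeasurableSet, Measure.volume_eq_prod,
      Measure.prod_apply (hΦmp.measurable hA2meas)]
    rfl
  have hmain : volume (Scomp \ {x ∈ Scomp | x + t • (fun _ => (1 : ℝ)) ∈ Scomp})
      ≤ ENNReal.ofReal t * (ENNReal.ofReal u *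
        (ENNReal.ofReal ((M * u/2)^n) *
          volume (Metric.ball (0 : EuclideanSpace ℝ (Fin n)) 1))) := by
    refine le_trans (measure_mono hAsub) ?_
    rw [hA2vol]
    refine le_trans (lintegral_mono hslice) ?_
    rw [lintegral_indicator_const hEmeas]
    exact mul_le_mul_right (volE n M hM) _
  -- wrap up
  have hVfin : volume (Metric.ball (0 : EuclideanSpace ℝ (Fin n)) 1) ≠ ⊤ :=
    measure_ball_lt_top.ne
  have hRfin : ENNReal.ofReal t * (ENNReal.ofReal u *
      (ENNReal.ofReal ((M * u/2)^n) *
        volume (Metric.ball (0 : EuclideanSpace ℝ (Fin n)) 1))) ≠ ⊤ := by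
    exact ENNReal.mul_ne_top ENNReal.ofReal_ne_top (ENNReal.mul_ne_top ENNReal.ofReal_ne_top
      (ENNReal.mul_ne_top ENNReal.ofReal_ne_top hVfin))
  refine le_trans (ENNReal.toReal_mono hRfin hmain) ?_
  rw [ENNReal.toReal_mul, ENNReal.toReal_mul, ENNReal.toReal_mul,
    ENNReal.toReal_ofReal ht.le, ENNReal.toReal_ofReal hu0.le,
    ENNReal.toReal_ofReal (by positivity)]
  have hcast2 : ((↑(n+1) : ℝ)) = (n:ℝ)+1 := by push_cast; ring
  rw [hcast2, ← hu]
  have : (M * u/2)^n = M^n * (u/2)^n := by rw [show M * u/2 = M * (u/2) by ring, mul_pow]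
  rw [this]
  ring_nf
  exact le_refl _
end
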